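/- arXiv:2201.03819 — 3 statements merged into one kernel-verified Lean document; each statement's English description precedes it below -/
import Mathlib

section
/- Consider the planar ODE system X₁' = (1 - X₂)|X₁|, X₂' = 1 with initial condition X₁(0) = a, X₂(0) = 0. Then the solution satisfies X₁(2) = a and X₂(2) = 2. -/
open Set

/-- Example 3.8 of Barton et al.: for the planar system `X₁' = (1 - X₂)|X₁|`,
`X₂' = 1` with `X₁(0) = a`, `X₂(0) = 0`, the time-2 flow is `(a,0) ↦ (a,2)`. -/
theorem barton_example_flow
    (a : ℝ) (X₁ X₂ : ℝ → ℝ)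
    (h0₁ : X₁ 0 = a) (h0₂ : X₂ 0 = 0)
    (hd₁ : ∀ t ∈ Icc (0 : ℝ) 2, HasDerivAt X₁ ((1 - X₂ t) * |X₁ t|) t)
    (hd₂ : ∀ t ∈ Icc (0 : ℝ) 2, HasDerivAt X₂ 1 t) :
    X₁ 2 = a ∧ X₂ 2 = 2 := by
  -- Step 1: X₂ t = t on [0,2]
  have hX₂ : ∀ t ∈ Icc (0 : ℝ) 2, X₂ t = t := by
    have hc : ContinuousOn (fun t => X₂ t - t) (Icc (0:ℝ) 2) := fun t ht =>
      (((hd₂ t ht).continuousAt).sub continuous_id.continuousAt).continuousWithinAt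
    have hd : ∀ t ∈ Ico (0:ℝ) 2, HasDerivWithinAt (fun t => X₂ t - t) 0 (Ici t) t := by
      intro t ht
      have : HasDerivAt (fun t => X₂ t - t) (1 - 1) t :=
        (hd₂ t (Ico_subset_Icc_self ht)).sub (hasDerivAt_id t)
      simpa using this.hasDerivWithinAt
    intro t ht
    have := constant_of_has_deriv_right_zero hc hd t ht
    simp only [h0₂, sub_zero] at this
    linarith
  have hcont₁ : ContinuousOn X₁ (Icc (0:ℝ) 2) := fun t ht =>
    ((hd₁ t ht).continuousAt).continuousWithinAt
  -- Step 2: if X₁ vanishes somewhere on [0,2], then a = 0 (backward Grönwall)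
  have hzero : ∀ t₀ ∈ Icc (0:ℝ) 2, X₁ t₀ = 0 → a = 0 := by
    intro t₀ ht₀ hz
    set g : ℝ → ℝ := fun s => X₁ (t₀ - s) with hg
    have hgc : ContinuousOn g (Icc 0 t₀) := by
      apply hcont₁.comp (continuous_const.sub continuous_id).continuousOn
      intro s hs
      obtain ⟨h1, h2⟩ := hs
      simp only [mem_Icc, id_eq, Pi.sub_apply]
      constructor <;> linarith [ht₀.1, ht₀.2]
    have hgd : ∀ s ∈ Ico (0:ℝ) t₀,
        HasDerivWithinAt g (-((1 - X₂ (t₀ - s)) * |X₁ (t₀ - s)|)) (Ici s) s := by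
      intro s hs
      have hmem : t₀ - s ∈ Icc (0:ℝ) 2 := ⟨by linarith [hs.2], by linarith [hs.1, ht₀.2]⟩
      have h1 : HasDerivAt (fun s : ℝ => t₀ - s) (-1) s := by
        simpa [Pi.sub_def] using (hasDerivAt_const s t₀).sub (hasDerivAt_id s)
      have := (hd₁ (t₀ - s) hmem).comp s h1
      have h' := this.hasDerivWithinAt (s := Ici s)
      rw [show (1 - X₂ (t₀ - s)) * |X₁ (t₀ - s)| * -1 = -((1 - X₂ (t₀ - s)) * |X₁ (t₀ - s)|) by ring] at h'
      rw [hg]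
      exact h'
    have hbound : ∀ s ∈ Ico (0:ℝ) t₀,
        ‖-((1 - X₂ (t₀ - s)) * |X₁ (t₀ - s)|)‖ ≤ 1 * ‖g s‖ + 0 := by
      intro s hs
      have hmem : t₀ - s ∈ Icc (0:ℝ) 2 := ⟨by linarith [hs.2], by linarith [hs.1, ht₀.2]⟩
      have h2 := hX₂ (t₀ - s) hmem
      rw [norm_neg, norm_mul, h2]
      have : |1 - (t₀ - s)| ≤ 1 := by
        rw [abs_le]; constructor <;> [linarith [hmem.2]; linarith [hmem.1]]
      have hn : ‖|X₁ (t₀ - s)|‖ = ‖g s‖ := by simp [hg]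
      rw [hn, add_zero]
      exact mul_le_mul_of_nonneg_right this (norm_nonneg _)
    have hga : ‖g 0‖ ≤ 0 := by simp [hg, hz]
    have := norm_le_gronwallBound_of_norm_deriv_right_le hgc hgd hga hbound t₀
      ⟨ht₀.1, le_refl t₀⟩
    rw [gronwallBound_ε0_δ0] at this
    have : g t₀ = 0 := by simpa using le_antisymm this (norm_nonneg _)
    simp [hg, h0₁] at this
    linarith
  rcases lt_trichotomy a 0 with ha | ha | ha
  · -- a < 0 : X₁ stays negative
    have hneg : ∀ t ∈ Icc (0:ℝ) 2, X₁ t < 0 := by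
      intro t ht
      by_contra h
      push_neg at h
      rcases eq_or_lt_of_le h with h' | h'
      · exact absurd (hzero t ht h'.symm) (ne_of_lt ha)
      · -- X₁ 0 = a < 0 < X₁ t : IVT gives a zero
        have hsub : Icc (0:ℝ) t ⊆ Icc (0:ℝ) 2 := Icc_subset_Icc le_rfl ht.2
        have := intermediate_value_Icc ht.1 (hcont₁.mono hsub)
        have h0 : (0:ℝ) ∈ Icc (X₁ 0) (X₁ t) := ⟨by rw [h0₁]; exact le_of_lt ha, le_of_lt h'⟩
        obtain ⟨s, hs, hs0⟩ := this h0
        exact absurd (hzero s (hsub hs) hs0) (ne_of_lt ha)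
    -- w t = X₁ t * exp (t - t^2/2) is constant
    have hE : ∀ t : ℝ, HasDerivAt (fun t : ℝ => Real.exp (t - t^2/2)) ((1 - t) * Real.exp (t - t^2/2)) t := by
      intro t
      have h1 : HasDerivAt (fun t : ℝ => t - t^2/2) (1 - t) t := by
        simpa [Pi.sub_def] using (hasDerivAt_id t).sub ((hasDerivAt_pow 2 t).div_const 2)
      simpa [mul_comm] using h1.exp
    have hwc : ContinuousOn (fun t => X₁ t * Real.exp (t - t^2/2)) (Icc (0:ℝ) 2) :=
      hcont₁.mul (fun t _ => (hE t).continuousAt.continuousWithinAt)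
    have hwd : ∀ t ∈ Ico (0:ℝ) 2,
        HasDerivWithinAt (fun t => X₁ t * Real.exp (t - t^2/2)) 0 (Ici t) t := by
      intro t ht
      have htI := Ico_subset_Icc_self ht
      have hD := (hd₁ t htI).mul (hE t)
      have habs : |X₁ t| = -(X₁ t) := abs_of_neg (hneg t htI)
      have h2 := hX₂ t htI
      have : (1 - X₂ t) * |X₁ t| * Real.exp (t - t^2/2)
          + X₁ t * ((1 - t) * Real.exp (t - t^2/2)) = 0 := by
        rw [habs, h2]; ring
      rw [this] at hD
      exact hD.hasDerivWithinAt
    have := constant_of_has_deriv_right_zero hwc hwd 2 ⟨by norm_num, le_rfl⟩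
    have h22 : (2:ℝ) - 2^2/2 = 0 := by norm_num
    rw [h22] at this
    simp [h0₁] at this
    exact ⟨this, by linarith [hX₂ 2 ⟨by norm_num, le_rfl⟩]⟩
  · -- a = 0
    refine ⟨?_, by linarith [hX₂ 2 ⟨by norm_num, le_rfl⟩]⟩
    -- forward Grönwall: X₁ ≡ 0
    have hbound : ∀ t ∈ Ico (0:ℝ) 2, ‖(1 - X₂ t) * |X₁ t|‖ ≤ 1 * ‖X₁ t‖ + 0 := by
      intro t ht
      have htI := Ico_subset_Icc_self ht
      rw [norm_mul, hX₂ t htI]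
      have h1 : |1 - t| ≤ 1 := by
        rw [abs_le]; constructor <;> [linarith [htI.2]; linarith [htI.1]]
      have hn : ‖|X₁ t|‖ = ‖X₁ t‖ := by simp
      rw [hn, add_zero]
      exact mul_le_mul_of_nonneg_right h1 (norm_nonneg _)
    have hderiv : ∀ t ∈ Ico (0:ℝ) 2,
        HasDerivWithinAt X₁ ((1 - X₂ t) * |X₁ t|) (Ici t) t := fun t ht =>
      (hd₁ t (Ico_subset_Icc_self ht)).hasDerivWithinAt
    have ha0 : ‖X₁ 0‖ ≤ 0 := by simp [h0₁, ha]
    have := norm_le_gronwallBound_of_norm_deriv_right_le hcont₁ hderiv ha0 hbound 2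
      ⟨by norm_num, le_rfl⟩
    rw [gronwallBound_ε0_δ0] at this
    have h2 : X₁ 2 = 0 := by simpa using le_antisymm this (norm_nonneg _)
    rw [h2, ha]
  · -- a > 0 : X₁ stays positive
    have hpos : ∀ t ∈ Icc (0:ℝ) 2, 0 < X₁ t := by
      intro t ht
      by_contra h
      push_neg at h
      rcases eq_or_lt_of_le h with h' | h'
      · exact absurd (hzero t ht h') (ne_of_gt ha)
      · have hsub : Icc (0:ℝ) t ⊆ Icc (0:ℝ) 2 := Icc_subset_Icc le_rfl ht.2
        have := intermediate_value_Icc' ht.1 (hcont₁.mono hsub)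
        have h0 : (0:ℝ) ∈ Icc (X₁ t) (X₁ 0) := ⟨le_of_lt h', by rw [h0₁]; exact le_of_lt ha⟩
        obtain ⟨s, hs, hs0⟩ := this h0
        exact absurd (hzero s (hsub hs) hs0) (ne_of_gt ha)
    -- u t = X₁ t * exp (t^2/2 - t) is constant
    have hE : ∀ t : ℝ, HasDerivAt (fun t : ℝ => Real.exp (t^2/2 - t)) ((t - 1) * Real.exp (t^2/2 - t)) t := by
      intro t
      have h1 : HasDerivAt (fun t : ℝ => t^2/2 - t) (t - 1) t := by
        simpa [Pi.sub_def] using ((hasDerivAt_pow 2 t).div_const 2).sub (hasDerivAt_id t)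
      simpa [mul_comm] using h1.exp
    have hwc : ContinuousOn (fun t => X₁ t * Real.exp (t^2/2 - t)) (Icc (0:ℝ) 2) :=
      hcont₁.mul (fun t _ => (hE t).continuousAt.continuousWithinAt)
    have hwd : ∀ t ∈ Ico (0:ℝ) 2,
        HasDerivWithinAt (fun t => X₁ t * Real.exp (t^2/2 - t)) 0 (Ici t) t := by
      intro t ht
      have htI := Ico_subset_Icc_self ht
      have hD := (hd₁ t htI).mul (hE t)
      have habs : |X₁ t| = X₁ t := abs_of_pos (hpos t htI)
      have h2 := hX₂ t htI
      have : (1 - X₂ t) * |X₁ t| * Real.exp (t^2/2 - t)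
          + X₁ t * ((t - 1) * Real.exp (t^2/2 - t)) = 0 := by
        rw [habs, h2]; ring
      rw [this] at hD
      exact hD.hasDerivWithinAt
    have := constant_of_has_deriv_right_zero hwc hwd 2 ⟨by norm_num, le_rfl⟩
    have h22 : (2:ℝ)^2/2 - 2 = 0 := by norm_num
    rw [h22] at this
    simp [h0₁] at this
    exact ⟨this, by linarith [hX₂ 2 ⟨by norm_num, le_rfl⟩]⟩
end

section
/- Let D : ℝ^p ⇉ ℝ^{n×p} be a conservative Jacobian for a locally Lipschitz f : ℝ^p → ℝ^n. Then the pointwise convex hull x ⇉ conv(D(x)) is also a conservative Jacobian for f. -/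
open MeasureTheory Set

lemma dite_sum_pad {ι M : Type*} [Fintype ι] [AddCommMonoid M] {k m : ℕ} (hkm : k ≤ m)
    (e : Fin k ≃ ι) (F : ι → M) :
    ∑ i : Fin m, (if h : (i : ℕ) < k then F (e ⟨i, h⟩) else 0) = ∑ j, F j := by
  have hg : ∀ i : Fin k, (fun i : ℕ => if h : i < k then F (e ⟨i, h⟩) else 0) (i : ℕ) = F (e i) := by
    intro i; simp [i.isLt]
  rw [← Equiv.sum_comp e F]
  rw [Fin.sum_univ_eq_sum_range (fun i : ℕ => if h : i < k then F (e ⟨i, h⟩) else 0) m]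
  rw [← Finset.sum_subset (Finset.range_subset_range.2 hkm)
    (fun i _ hi => dif_neg (by simpa using hi))]
  rw [← Fin.sum_univ_eq_sum_range (fun i : ℕ => if h : i < k then F (e ⟨i, h⟩) else 0) k]
  exact Finset.sum_congr rfl fun i _ => hg i

/-- Carathéodory's theorem with a fixed number of points. -/
lemma carat_pad {E : Type*} [AddCommGroup E] [Module ℝ E] [FiniteDimensional ℝ E] {s : Set E}
    {x : E} (hx : x ∈ convexHull ℝ s) :
    ∃ (c : Fin (Module.finrank ℝ E + 1) → ℝ) (v : Fin (Module.finrank ℝ E + 1) → E),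
      (∀ i, 0 ≤ c i) ∧ ∑ i, c i = 1 ∧ (∀ i, v i ∈ s) ∧ ∑ i, c i • v i = x := by
  obtain ⟨ι, hfin, z, w, hzs, hai, hw0, hw1, hwx⟩ := eq_pos_convex_span_of_mem_convexHull hx
  have hk : Fintype.card ι ≤ Module.finrank ℝ E + 1 := by
    have h1 := hai.card_le_finrank_succ
    have h2 := Submodule.finrank_le (vectorSpan ℝ (Set.range z))
    omega
  have hne : Nonempty ι := by
    by_contra h
    rw [not_nonempty_iff] at h
    simp at hw1
  obtain ⟨i₀⟩ := hne
  set k := Fintype.card ι with hkdef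
  let e : Fin k ≃ ι := (Fintype.equivFin ι).symm
  refine ⟨fun i => if h : (i : ℕ) < k then w (e ⟨i, h⟩) else 0,
          fun i => if h : (i : ℕ) < k then z (e ⟨i, h⟩) else z i₀, ?_, ?_, ?_, ?_⟩
  · intro i; dsimp only; split
    · exact (hw0 _).le
    · exact le_rfl
  · rw [dite_sum_pad hk e w]; exact hw1
  · intro i; dsimp only; split
    · exact hzs (mem_range_self _)
    · exact hzs (mem_range_self _)
  · rw [← dite_sum_pad hk e (fun j => w j • z j)] at hwx
    rw [← hwx]
    refine Finset.sum_congr rfl fun i _ => ?_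
    dsimp only; split
    · rfl
    · simp

/-- The graph of the pointwise convex hull of a locally bounded set-valued map with
closed graph is closed. -/
lemma graph_convexHull_closed {n p : ℕ}
    (D : (Fin p → ℝ) → Set (Matrix (Fin n) (Fin p) ℝ))
    (hlb : ∀ x : Fin p → ℝ, ∃ ε > (0 : ℝ), ∃ C : ℝ,
      ∀ y, dist y x < ε → ∀ V ∈ D y, ∀ i j, |V i j| ≤ C)
    (hcg : IsClosed {q : (Fin p → ℝ) × Matrix (Fin n) (Fin p) ℝ | q.2 ∈ D q.1}) :
    IsClosed {q : (Fin p → ℝ) × Matrix (Fin n) (Fin p) ℝ | q.2 ∈ convexHull ℝ (D q.1)} := by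
  apply isClosed_of_closure_subset
  rintro ⟨x, W⟩ hq
  obtain ⟨ε, hε, C, hC⟩ := hlb x
  let m := Module.finrank ℝ (Matrix (Fin n) (Fin p) ℝ) + 1
  let B : Set (Matrix (Fin n) (Fin p) ℝ) := {V | ∀ i j, V i j ∈ Icc (-C) C}
  have hBcompact : IsCompact B := by
    have h1 : IsCompact (univ.pi fun _ : Fin n => (univ.pi fun _ : Fin p => Icc (-C) C)) :=
      isCompact_univ_pi fun _ => isCompact_univ_pi fun _ => isCompact_Icc
    have h2 : (univ.pi fun _ : Fin n => (univ.pi fun _ : Fin p => Icc (-C) C))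
        = {g : Fin n → Fin p → ℝ | ∀ i j, g i j ∈ Icc (-C) C} := by
      ext g
      simp only [Set.mem_pi, mem_univ, forall_true_left, mem_setOf_eq, mem_Icc, forall_const]
    rw [h2] at h1
    exact h1
  have hDB : ∀ y ∈ Metric.ball x ε, D y ⊆ B := by
    intro y hy V hV i j
    exact mem_Icc.2 (abs_le.1 (hC y (Metric.mem_ball.1 hy) V hV i j))
  let A : Set ((Fin m → ℝ) × ((Fin p → ℝ) × (Fin m → Matrix (Fin n) (Fin p) ℝ))) :=
    ((stdSimplex ℝ (Fin m)) ×ˢ ((Metric.closedBall x (ε/2)) ×ˢ (univ.pi fun _ => B)))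
      ∩ {a | ∀ i, a.2.2 i ∈ D a.2.1}
  let Φ : (Fin m → ℝ) × ((Fin p → ℝ) × (Fin m → Matrix (Fin n) (Fin p) ℝ))
      → (Fin p → ℝ) × Matrix (Fin n) (Fin p) ℝ :=
    fun a => (a.2.1, ∑ i, a.1 i • a.2.2 i)
  have hAcompact : IsCompact A := by
    refine IsCompact.inter_right ?_ ?_
    · exact (isCompact_stdSimplex ℝ _).prod
        ((isCompact_closedBall x (ε/2)).prod (isCompact_univ_pi fun _ => hBcompact))
    · have h3 : {a : (Fin m → ℝ) × ((Fin p → ℝ) × (Fin m → Matrix (Fin n) (Fin p) ℝ)) |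
          ∀ i, a.2.2 i ∈ D a.2.1}
          = ⋂ i : Fin m, (fun a : (Fin m → ℝ) × ((Fin p → ℝ) × (Fin m → Matrix (Fin n) (Fin p) ℝ)) =>
              (a.2.1, a.2.2 i)) ⁻¹' {q : (Fin p → ℝ) × Matrix (Fin n) (Fin p) ℝ | q.2 ∈ D q.1} := by
        ext a; simp
      rw [h3]
      exact isClosed_iInter fun i =>
        hcg.preimage ((continuous_snd.fst).prodMk ((continuous_apply i).comp
          continuous_snd.snd))
  have hΦcont : Continuous Φ := by
    refine continuous_snd.fst.prodMk ?_
    refine continuous_finset_sum _ fun i _ => ?_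
    exact ((continuous_apply i).comp continuous_fst).smul
      ((continuous_apply i).comp continuous_snd.snd)
  have hKclosed : IsClosed (Φ '' A) := (hAcompact.image hΦcont).isClosed
  have hsub : (Metric.ball x (ε/2) ×ˢ (univ : Set (Matrix (Fin n) (Fin p) ℝ)))
      ∩ {q : (Fin p → ℝ) × Matrix (Fin n) (Fin p) ℝ | q.2 ∈ convexHull ℝ (D q.1)} ⊆ Φ '' A := by
    rintro ⟨y, W'⟩ ⟨⟨hy, -⟩, hW'⟩
    obtain ⟨c, v, hc0, hc1, hvD, hsum⟩ := carat_pad hW'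
    refine ⟨⟨c, y, v⟩, ⟨⟨⟨hc0, hc1⟩, Metric.ball_subset_closedBall hy, fun i _ => ?_⟩,
      fun i => hvD i⟩, Prod.ext rfl hsum⟩
    exact hDB y (Metric.ball_subset_ball (by linarith) hy) (hvD i)
  have hq2 : (⟨x, W⟩ : (Fin p → ℝ) × Matrix (Fin n) (Fin p) ℝ) ∈ Φ '' A := by
    have hopen : IsOpen (Metric.ball x (ε/2) ×ˢ (univ : Set (Matrix (Fin n) (Fin p) ℝ))) :=
      Metric.isOpen_ball.prod isOpen_univ
    have h3 := hopen.inter_closure (s := Metric.ball x (ε/2) ×ˢ univ)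
      (t := {q : (Fin p → ℝ) × Matrix (Fin n) (Fin p) ℝ | q.2 ∈ convexHull ℝ (D q.1)})
    exact (closure_minimal hsub hKclosed) (h3 ⟨⟨Metric.mem_ball_self (by linarith), mem_univ _⟩, hq⟩)
  obtain ⟨⟨c, y, v⟩, ⟨⟨hcS, -, -⟩, hvD⟩, heq⟩ := hq2
  have hy : y = x := congrArg Prod.fst heq
  have hW : W = ∑ i, c i • v i := (congrArg Prod.snd heq).symm
  rw [mem_setOf_eq, hW]
  refine Convex.sum_mem (convex_convexHull ℝ _) (fun i _ => hcS.1 i) hcS.2 fun i _ => ?_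
  apply subset_convexHull ℝ _
  rw [← hy]
  exact hvD i

/-- `D` is a conservative Jacobian for `f : ℝ^p → ℝ^n`: it is nonempty-valued,
locally bounded, has closed graph, and satisfies the chain rule along every
absolutely continuous curve `γ : [0,1] → ℝ^p` (with integrable a.e. derivative `γ'`). -/
def IsConservativeJacobian {n p : ℕ}
    (D : (Fin p → ℝ) → Set (Matrix (Fin n) (Fin p) ℝ))
    (f : (Fin p → ℝ) → (Fin n → ℝ)) : Prop :=
  (∀ x, (D x).Nonempty) ∧
  (∀ x : Fin p → ℝ, ∃ ε > (0 : ℝ), ∃ C : ℝ,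
    ∀ y, dist y x < ε → ∀ V ∈ D y, ∀ i j, |V i j| ≤ C) ∧
  IsClosed {q : (Fin p → ℝ) × Matrix (Fin n) (Fin p) ℝ | q.2 ∈ D q.1} ∧
  (∀ γ γ' : ℝ → (Fin p → ℝ),
    IntegrableOn γ' (Icc (0 : ℝ) 1) →
    (∀ t ∈ Icc (0 : ℝ) 1, γ t - γ 0 = ∫ s in (0 : ℝ)..t, γ' s) →
    ∀ᵐ t ∂(volume.restrict (Icc (0 : ℝ) 1)),
      ∀ V ∈ D (γ t), HasDerivAt (fun s => f (γ s)) (V.mulVec (γ' t)) t)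

/-- The pointwise convex hull of a conservative Jacobian of a locally Lipschitz
function is again a conservative Jacobian. -/
theorem convexHull_isConservativeJacobian {n p : ℕ}
    (D : (Fin p → ℝ) → Set (Matrix (Fin n) (Fin p) ℝ))
    (f : (Fin p → ℝ) → (Fin n → ℝ))
    (hf : LocallyLipschitz f)
    (hD : IsConservativeJacobian D f) :
    IsConservativeJacobian (fun x => convexHull ℝ (D x)) f := by
  obtain ⟨hne, hlb, hcg, hcr⟩ := hD
  refine ⟨?_, ?_, ?_, ?_⟩
  · -- nonemptiness
    exact fun x => (hne x).mono (subset_convexHull ℝ _)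
  · -- local boundedness
    intro x
    obtain ⟨ε, hε, C, hC⟩ := hlb x
    refine ⟨ε, hε, C, fun y hy V hV i j => ?_⟩
    have hconv : Convex ℝ {V : Matrix (Fin n) (Fin p) ℝ | ∀ i j, V i j ∈ Icc (-C) C} := by
      intro U hU V hV a b ha hb hab i j
      have h := convex_Icc (-C) C (hU i j) (hV i j) ha hb hab
      simpa [Matrix.add_apply, Matrix.smul_apply, smul_eq_mul] using h
    have hsub : convexHull ℝ (D y) ⊆ {V : Matrix (Fin n) (Fin p) ℝ | ∀ i j, V i j ∈ Icc (-C) C} :=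
      convexHull_min (fun V hV i j => mem_Icc.2 (abs_le.1 (hC y hy V hV i j))) hconv
    exact abs_le.2 (mem_Icc.1 (hsub hV i j))
  · -- closed graph
    exact graph_convexHull_closed D hlb hcg
  · -- chain rule
    intro γ γ' hint hγ
    filter_upwards [hcr γ γ' hint hγ] with t ht
    intro V hV
    obtain ⟨V₀, hV₀⟩ := hne (γ t)
    have hAconv : Convex ℝ {U : Matrix (Fin n) (Fin p) ℝ |
        U.mulVec (γ' t) = V₀.mulVec (γ' t)} := by
      intro U1 h1 U2 h2 a b ha hb hab
      show (a • U1 + b • U2).mulVec (γ' t) = V₀.mulVec (γ' t)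
      rw [Matrix.add_mulVec, Matrix.smul_mulVec, Matrix.smul_mulVec, h1, h2,
        ← add_smul, hab, one_smul]
    have hsub : D (γ t) ⊆ {U : Matrix (Fin n) (Fin p) ℝ |
        U.mulVec (γ' t) = V₀.mulVec (γ' t)} :=
      fun U hU => (ht U hU).unique (ht V₀ hV₀)
    have hVeq : V.mulVec (γ' t) = V₀.mulVec (γ' t) := convexHull_min hsub hAconv hV
    rw [hVeq]
    exact ht V₀ hV₀
end

section
/- Let G : ℝ^n × ℝ → ℝ^m be such that y ↦ G(x,y) is absolutely continuous for each x and x ↦ G(x,y) is Borel measurable for each y. Then the set of (x,y) where ∂G/∂y(x,y) exists has full Lebesgue measure in ℝ^{n+1}, and (x,y) ↦ ∂G/∂y(x,y) (arbitrarily extended outside its domain) is Lebesgue measurable. -/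
open MeasureTheory Set Filter Function Metric IsUnifLocDoublingMeasure
open scoped Topology

notation "lrat" => Filter.comap ((↑) : ℚ → ℝ) (𝓝[≠] (0:ℝ))

lemma ae_hasDerivAt_primitive {E : Type*} [NormedAddCommGroup E] [NormedSpace ℝ E]
    [CompleteSpace E] {g : ℝ → E} (hg : LocallyIntegrable g volume) :
    ∀ᵐ y : ℝ, HasDerivAt (fun t => ∫ s in (0:ℝ)..t, g s) (g y) y := by
  have hint : ∀ a b : ℝ, IntervalIntegrable g volume a b := fun a b =>
    (hg.integrableOn_isCompact isCompact_uIcc).intervalIntegrable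
  filter_upwards [(vitaliFamily (volume : Measure ℝ) 1).ae_tendsto_average hg] with y hy
  have key : ∀ z : ℝ, z ≠ y →
      slope (fun t => ∫ s in (0:ℝ)..t, g s) y z = (z - y)⁻¹ • ∫ s in y..z, g s := by
    intro z hz
    rw [slope_def_module, intervalIntegral.integral_interval_sub_left (hint 0 z) (hint 0 y)]
  -- right limit
  have L1 : Tendsto (slope (fun t => ∫ s in (0:ℝ)..t, g s) y) (𝓝[>] y) (𝓝 (g y)) := by
    apply Tendsto.congr' _ (hy.comp (Real.tendsto_Icc_vitaliFamily_right y))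
    filter_upwards [self_mem_nhdsWithin] with z (hz : y < z)
    rw [key z hz.ne', comp_apply, setAverage_eq, Real.volume_real_Icc_of_le hz.le,
      intervalIntegral.integral_of_le hz.le,
      ← integral_Icc_eq_integral_Ioc]
  have L2 : Tendsto (slope (fun t => ∫ s in (0:ℝ)..t, g s) y) (𝓝[<] y) (𝓝 (g y)) := by
    apply Tendsto.congr' _ (hy.comp (Real.tendsto_Icc_vitaliFamily_left y))
    filter_upwards [self_mem_nhdsWithin] with z (hz : z < y)
    rw [key z hz.ne, comp_apply, setAverage_eq, Real.volume_real_Icc_of_le hz.le,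
      intervalIntegral.integral_symm,
      intervalIntegral.integral_of_le hz.le, ← integral_Icc_eq_integral_Ioc,
      smul_neg, ← neg_smul, ← inv_neg, neg_sub]
  rw [hasDerivAt_iff_tendsto_slope, ← nhdsLT_sup_nhdsGT, tendsto_sup]
  exact ⟨L2, L1⟩

lemma tendsto_add_cast_rat (y : ℝ) :
    Tendsto (fun r : ℚ => y + (r : ℝ)) lrat (𝓝[≠] y) := by
  rw [tendsto_nhdsWithin_iff]
  constructor
  · exact (tendsto_const_nhds.add
      ((tendsto_comap (f := ((↑) : ℚ → ℝ))).mono_right nhdsWithin_le_nhds)).congr (fun r => rfl)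
      |>.mono_right (by simp [add_zero])
  · have : ∀ᶠ h : ℝ in 𝓝[≠] (0:ℝ), h ≠ 0 := self_mem_nhdsWithin
    filter_upwards [(tendsto_comap (f := ((↑) : ℚ → ℝ))).eventually this] with r hr
    simpa using fun h => hr (by exact_mod_cast h)

lemma tendsto_slope_rat_of_hasDerivAt {E : Type*} [NormedAddCommGroup E] [NormedSpace ℝ E]
    {f : ℝ → E} {y : ℝ} {d : E} (h : HasDerivAt f d y) :
    Tendsto (fun r : ℚ => slope f y (y + (r : ℝ))) lrat (𝓝 d) :=
  ((hasDerivAt_iff_tendsto_slope.1 h).comp (tendsto_add_cast_rat y))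

lemma hasDerivAt_of_tendsto_slope_rat {E : Type*} [NormedAddCommGroup E] [NormedSpace ℝ E]
    {f : ℝ → E} (hf : Continuous f) {y : ℝ} {d : E}
    (h : Tendsto (fun r : ℚ => slope f y (y + (r : ℝ))) lrat (𝓝 d)) :
    HasDerivAt f d y := by
  rw [hasDerivAt_iff_tendsto_slope]
  rw [Metric.tendsto_nhds] at h ⊢
  intro ε hε
  have h2 := h (ε / 2) (by positivity)
  rw [eventually_comap] at h2
  obtain ⟨s, hs, hsub⟩ := (eventually_iff_exists_mem).1 h2
  obtain ⟨δ, hδ, hball⟩ := Metric.mem_nhdsWithin_iff.1 hs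
  have key : ∀ z : ℝ, z ≠ y → dist z y < δ → dist (slope f y z) d ≤ ε / 2 := by
    intro z hz hzd
    -- approximate z - y by rationals
    have hdense : (z - y) ∈ closure (range ((↑) : ℚ → ℝ)) := by
      rw [Rat.denseRange_cast.closure_eq]; trivial
    obtain ⟨u, hu_mem, hu_lim⟩ := mem_closure_iff_seq_limit.1 hdense
    have hzy : z - y ≠ 0 := sub_ne_zero.2 hz
    have hev : ∀ᶠ k in atTop, u k ≠ 0 ∧ |u k| < δ := by
      have h1 : ∀ᶠ k in atTop, u k ≠ 0 :=
        hu_lim.eventually_ne hzy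
      have h2' : ∀ᶠ k in atTop, |u k| < δ := by
        have : Tendsto (fun k => |u k|) atTop (𝓝 |z - y|) := hu_lim.abs
        apply this.eventually_lt_const
        rwa [Real.dist_eq] at hzd
      exact h1.and h2'
    have hcont : ContinuousAt (slope f y) z := by
      have h' : ContinuousAt (fun w => (w - y)⁻¹ • (f w - f y)) z :=
        ((continuousAt_id.sub continuousAt_const).inv₀ hzy).smul
          (hf.continuousAt.sub continuousAt_const)
      exact (funext fun w => (slope_def_module f y w).symm) ▸ h'
    have hseq : Tendsto (fun k => slope f y (y + u k)) atTop (𝓝 (slope f y z)) := by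
      have : Tendsto (fun k => y + u k) atTop (𝓝 z) := by
        have := tendsto_const_nhds (x := y) (f := atTop (α := ℕ)) |>.add hu_lim
        simpa using this
      exact hcont.tendsto.comp this
    have hdistlim : Tendsto (fun k => dist (slope f y (y + u k)) d) atTop
        (𝓝 (dist (slope f y z) d)) := hseq.dist tendsto_const_nhds
    refine le_of_tendsto hdistlim ?_
    filter_upwards [hev] with k hk
    obtain ⟨r, hr⟩ := hu_mem k
    have hmem : u k ∈ s := hball ⟨by simpa [Real.dist_0_eq_abs] using hk.2, hk.1⟩
    rw [← hr]
    exact (hsub (u k) hmem r hr).le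
  filter_upwards [inter_mem_nhdsWithin _ (Metric.ball_mem_nhds y hδ)] with z hz
  calc dist (slope f y z) d ≤ ε / 2 := key z hz.1 hz.2
    _ < ε := by linarith

/-- Measurability of partial derivatives: if `G : ℝ^n × ℝ → ℝ^m` is absolutely
continuous in `y` for each `x` (with a locally integrable density) and Borel
measurable in `x` for each `y`, then `∂G/∂y` exists at Lebesgue-almost every point
of `ℝ^{n+1}`, and (arbitrarily extended outside its domain of existence) it is a
Lebesgue measurable function of `(x,y)`. -/
theorem measurability_of_partial_derivatives
    (n m : ℕ) (G : (Fin n → ℝ) → ℝ → (Fin m → ℝ))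
    (hAC : ∀ x : Fin n → ℝ, ∃ g : ℝ → (Fin m → ℝ),
      LocallyIntegrable g ∧ ∀ y : ℝ, G x y - G x 0 = ∫ s in (0 : ℝ)..y, g s)
    (hmeas : ∀ y : ℝ, Measurable fun x => G x y) :
    (∀ᵐ q ∂(volume : Measure ((Fin n → ℝ) × ℝ)),
      ∃ d : Fin m → ℝ, HasDerivAt (G q.1) d q.2) ∧
    (∃ h : (Fin n → ℝ) × ℝ → (Fin m → ℝ),
      AEMeasurable h (volume : Measure ((Fin n → ℝ) × ℝ)) ∧
      ∀ᵐ q ∂(volume : Measure ((Fin n → ℝ) × ℝ)),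
        HasDerivAt (G q.1) (h q) q.2) := by
  -- continuity in `y`
  have Gcont : ∀ x, Continuous (G x) := by
    intro x
    obtain ⟨g, hgint, hgrep⟩ := hAC x
    have hrep : G x = fun y => (∫ s in (0:ℝ)..y, g s) + G x 0 :=
      funext fun y => by rw [← hgrep y]; abel
    rw [hrep]
    exact (intervalIntegral.continuous_primitive
      (fun a b => (hgint.integrableOn_isCompact isCompact_uIcc).intervalIntegrable) 0).add
      continuous_const
  -- joint measurability
  have Hmeas : Measurable (fun q : (Fin n → ℝ) × ℝ => G q.1 q.2) := by
    have := measurable_uncurry_of_continuous_of_measurable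
      (u := fun (y : ℝ) (x : Fin n → ℝ) => G x y) (fun x => Gcont x) hmeas
    exact this.comp measurable_swap
  -- measurable difference quotients over rational increments
  set S : ℚ → ((Fin n → ℝ) × ℝ) → (Fin m → ℝ) :=
    fun r q => slope (G q.1) q.2 (q.2 + (r : ℝ)) with hS_def
  have hS : ∀ r : ℚ, Measurable (S r) := by
    intro r
    have : S r = fun q => ((r : ℝ))⁻¹ • (G q.1 (q.2 + (r : ℝ)) - G q.1 q.2) := by
      funext q
      simp only [hS_def, slope_def_module, add_sub_cancel_left]
    rw [this]
    exact (measurable_const (a := ((r : ℝ))⁻¹)).smul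
      ((Hmeas.comp (measurable_fst.prodMk (measurable_snd.add_const _))).sub Hmeas)
  -- the set where the rational difference quotients converge
  set Eset : Set ((Fin n → ℝ) × ℝ) :=
    {q | ∃ c, Tendsto (fun r : ℚ => S r q) lrat (𝓝 c)} with hEset_def
  have hEset : MeasurableSet Eset := measurableSet_exists_tendsto hS
  -- each slice has full measure
  have hslice : ∀ x, ∀ᵐ y : ℝ, (x, y) ∈ Eset := by
    intro x
    obtain ⟨g, hgint, hgrep⟩ := hAC x
    have hrep : G x = fun y => (∫ s in (0:ℝ)..y, g s) + G x 0 :=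
      funext fun y => by rw [← hgrep y]; abel
    filter_upwards [ae_hasDerivAt_primitive hgint] with y hy
    have hG : HasDerivAt (G x) (g y) y := by rw [hrep]; exact hy.add_const _
    exact ⟨g y, tendsto_slope_rat_of_hasDerivAt hG⟩
  -- Fubini: the set has full measure in the product
  have hfull : ∀ᵐ q ∂(volume : Measure ((Fin n → ℝ) × ℝ)), q ∈ Eset := by
    rw [ae_iff]
    have : {q : (Fin n → ℝ) × ℝ | ¬ q ∈ Eset} = Esetᶜ := rfl
    rw [this, Measure.volume_eq_prod, Measure.measure_prod_null hEset.compl]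
    filter_upwards with x
    have := hslice x
    rw [ae_iff] at this
    convert this using 2 <;> rfl
  -- the measurable limit function
  obtain ⟨h, hmeas_h, htend⟩ :=
    measurable_limit_of_tendsto_metrizable_ae (μ := (volume : Measure ((Fin n → ℝ) × ℝ)))
      (L := lrat) (fun r => (hS r).aemeasurable) hfull
  have key : ∀ᵐ q ∂(volume : Measure ((Fin n → ℝ) × ℝ)), HasDerivAt (G q.1) (h q) q.2 := by
    filter_upwards [htend] with q hq
    exact hasDerivAt_of_tendsto_slope_rat (Gcont q.1) hq
  exact ⟨key.mono fun q hq => ⟨h q, hq⟩, h, hmeas_h.aemeasurable, key⟩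
end
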